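/- Let ℱ be a family of finite simple graphs and let K be a colored regularity graph such that no F ∈ ℱ admits a colored homomorphism into K. Then for every n ≥ 2 and every simple graph G on n vertices with m edges, there exists an ℱ-free graph G′ on the same vertex set with |E(G) △ E(G′)| ≤ f_K(m/binom(n,2)) · binom(n,2). In particular, Dist(G, Forb(ℱ)) ≤ f_K(m/binom(n,2)) · binom(n,2). -/

import Mathlib

/-- The three possible colors of an edge of a colored regularity graph. -/
inductive EColor : Type
  | white
  | gray
  | black
deriving DecidableEq

/-- A colored regularity graph (CRG): a finite nonempty vertex set (here `Fin n`),
each vertex colored white (`vcol i = false`) or black (`vcol i = true`), and each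
unordered pair of distinct vertices colored white, gray or black. -/
structure CRG : Type where
  n : ℕ
  npos : 0 < n
  vcol : Fin n → Bool
  ecol : Fin n → Fin n → EColor
  ecol_symm : ∀ i j, ecol i j = ecol j i

namespace CRG

/-- The function `f_K(p) = (1/k²)[p(|VW| + 2|EW|) + (1-p)(|VB| + 2|EB|)]`; the
counts over ordered pairs of distinct vertices give `2|EW|` and `2|EB|`. -/
noncomputable def fK (K : CRG) (p : ℝ) : ℝ :=
  (1 / (K.n : ℝ) ^ 2) *
    (p * (((Finset.univ.filter (fun i : Fin K.n => K.vcol i = false)).card : ℝ)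
        + ((Finset.univ.filter (fun ij : Fin K.n × Fin K.n =>
            ij.1 ≠ ij.2 ∧ K.ecol ij.1 ij.2 = EColor.white)).card : ℝ))
   + (1 - p) * (((Finset.univ.filter (fun i : Fin K.n => K.vcol i = true)).card : ℝ)
        + ((Finset.univ.filter (fun ij : Fin K.n × Fin K.n =>
            ij.1 ≠ ij.2 ∧ K.ecol ij.1 ij.2 = EColor.black)).card : ℝ)))

/-- The matrix `M_K(p)`. -/
noncomputable def M (K : CRG) (p : ℝ) : Matrix (Fin K.n) (Fin K.n) ℝ :=
  Matrix.of fun i j =>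
    if i = j then (if K.vcol i then 1 - p else p)
    else
      match K.ecol i j with
      | EColor.white => p
      | EColor.gray => 0
      | EColor.black => 1 - p

/-- The function `g_K(p)`: the minimum (here: infimum, which is attained) of the
quadratic form `uᵀ M_K(p) u` over the standard simplex. -/
noncomputable def gK (K : CRG) (p : ℝ) : ℝ :=
  sInf { x : ℝ | ∃ u : Fin K.n → ℝ, (∀ i, 0 ≤ u i) ∧ (∑ i, u i) = 1 ∧
    x = ∑ i, ∑ j, u i * K.M p i j * u j }

end CRG

/-- A colored homomorphism from a simple graph `F` to a CRG `K`. -/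
def CHom {V : Type} (F : SimpleGraph V) (K : CRG) : Prop :=
  ∃ φ : V → Fin K.n,
    (∀ u v : V, F.Adj u v →
      (φ u = φ v ∧ K.vcol (φ u) = true) ∨
      (φ u ≠ φ v ∧ K.ecol (φ u) (φ v) ≠ EColor.white)) ∧
    (∀ u v : V, u ≠ v → ¬ F.Adj u v →
      (φ u = φ v ∧ K.vcol (φ u) = false) ∨
      (φ u ≠ φ v ∧ K.ecol (φ u) (φ v) ≠ EColor.black))

/-- A family of finite simple graphs, each presented on a vertex set `Fin n`. -/
abbrev GraphFam : Type := Set ((n : ℕ) × SimpleGraph (Fin n))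

/-- The edit distance between two simple graphs on the same finite vertex set. -/
noncomputable def editDist {V : Type} [Fintype V] (G G' : SimpleGraph V) : ℕ :=
  (symmDiff G.edgeSet G'.edgeSet).ncard

/-- A graph `G` is `ℱ`-free if no member of `ℱ` embeds into `G`. -/
def FamFree (ℱ : GraphFam) {V : Type} (G : SimpleGraph V) : Prop :=
  ∀ F ∈ ℱ, ¬ Nonempty (F.2 ↪g G)

/-- `Dist(G, Forb(ℱ))`: minimum edit distance from `G` to an `ℱ`-free graph on
the same vertex set. -/
noncomputable def distFam (ℱ : GraphFam) {V : Type} [Fintype V] (G : SimpleGraph V) : ℕ :=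
  sInf { d | ∃ G' : SimpleGraph V, FamFree ℱ G' ∧ d = editDist G G' }

/-- `Dist(n, Forb(ℱ))`: maximum of `Dist(G, Forb(ℱ))` over `n`-vertex graphs. -/
noncomputable def distFamN (ℱ : GraphFam) (n : ℕ) : ℕ :=
  sSup { d | ∃ G : SimpleGraph (Fin n), d = distFam ℱ G }

/-- `𝒦(ℱ)`: the set of CRGs into which no member of `ℱ` has a colored homomorphism. -/
def KFam (ℱ : GraphFam) : Set CRG := { K : CRG | ∀ F ∈ ℱ, ¬ CHom F.2 K }


section AuxCRG

open Finset

private lemma card_ordered_pairs {V : Type} [Fintype V] [DecidableEq V]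
    (H : SimpleGraph V) [DecidableRel H.Adj] :
    (Finset.univ.filter fun p : V × V => H.Adj p.1 p.2).card = 2 * H.edgeFinset.card := by
  rw [← SimpleGraph.dart_card_eq_twice_card_edges, ← Fintype.card_subtype]
  exact (Fintype.card_congr ⟨fun p => ⟨p.1, p.2⟩, fun d => ⟨d.toProd, d.adj⟩,
    fun p => rfl, fun d => rfl⟩)

private lemma card_diag_filter {k : ℕ} (P : Fin k → Prop) [DecidablePred P] :
    (Finset.univ.filter fun ij : Fin k × Fin k => ij.1 = ij.2 ∧ P ij.1).card
      = (Finset.univ.filter P).card := by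
  apply Finset.card_bij' (fun ij _ => ij.1) (fun i _ => (i, i)) <;>
    simp +contextual [Prod.ext_iff, eq_comm]

private lemma card_diag_filter' {k : ℕ} (Q : Fin k × Fin k → Prop) (P : Fin k → Prop)
    [DecidablePred Q] [DecidablePred P]
    (h : ∀ ij : Fin k × Fin k, Q ij ↔ (ij.1 = ij.2 ∧ P ij.1)) :
    (Finset.univ.filter Q).card = (Finset.univ.filter P).card := by
  classical
  have h1 : (Finset.univ.filter Q).card
      = (Finset.univ.filter fun ij : Fin k × Fin k => ij.1 = ij.2 ∧ P ij.1).card := by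
    congr 1
    exact Finset.filter_congr fun ij _ => h ij
  rw [h1, card_diag_filter]

private lemma card_filter_or_disjoint {α : Type} [Fintype α] (p q r : α → Prop)
    [DecidablePred p] [DecidablePred q] [DecidablePred r]
    (h : ∀ a, p a ↔ (q a ∨ r a)) (hd : ∀ a, q a → r a → False) :
    (Finset.univ.filter p).card
      = (Finset.univ.filter q).card + (Finset.univ.filter r).card := by
  classical
  have h1 : (Finset.univ.filter p).card
      = (Finset.univ.filter fun a => q a ∨ r a).card := by
    congr 1
    exact Finset.filter_congr fun a _ => h a
  rw [h1, Finset.filter_or, Finset.card_union_of_disjoint]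
  rw [Finset.disjoint_left]
  intro a ha hb
  simp only [Finset.mem_filter] at ha hb
  exact hd a ha.2 hb.2

private lemma card_diag_pairs {n : ℕ} :
    (Finset.univ.filter fun ij : Fin n × Fin n => ij.1 = ij.2).card = n := by
  classical
  have h : (Finset.univ.filter fun ij : Fin n × Fin n => ij.1 = ij.2)
      = Finset.univ.filter fun ij : Fin n × Fin n => ij.1 = ij.2 ∧ (fun _ => True) ij.1 := by
    simp
  rw [h, card_diag_filter (fun _ : Fin n => True)]
  simp

private lemma card_class {n k : ℕ} {u v : Fin n} (huv : u ≠ v) (i j i' j' : Fin k) :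
    (Finset.univ.filter fun φ : Fin n → Fin k => φ u = i ∧ φ v = j).card
      = (Finset.univ.filter fun φ : Fin n → Fin k => φ u = i' ∧ φ v = j').card := by
  classical
  have key : ∀ (a b a' b' : Fin k) (φ : Fin n → Fin k), φ u = a → φ v = b →
      Function.update (Function.update (Function.update (Function.update φ u a') v b') u a) v b
        = φ := by
    intro a b a' b' φ ha hb
    funext x
    by_cases hv : x = v
    · subst hv; simp [hb]
    · by_cases hu : x = u
      · subst hu; simp [Function.update_of_ne huv, ha]
      · simp [Function.update_of_ne hv, Function.update_of_ne hu]
  apply Finset.card_bij' (fun φ _ => Function.update (Function.update φ u i') v j')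
    (fun φ _ => Function.update (Function.update φ u i) v j)
  · intro φ hφ
    simp only [mem_filter] at hφ
    exact key _ _ _ _ φ hφ.2.1 hφ.2.2
  · intro φ hφ
    simp only [mem_filter] at hφ
    exact key _ _ _ _ φ hφ.2.1 hφ.2.2
  · intro φ hφ
    simp [Function.update_of_ne huv]
  · intro φ hφ
    simp [Function.update_of_ne huv]

private lemma sum_fun_eq {n k : ℕ} (u v : Fin n) (F : Fin k → Fin k → ℕ) :
    ∑ φ : Fin n → Fin k, F (φ u) (φ v)
      = ∑ ij : Fin k × Fin k,
          (Finset.univ.filter fun φ : Fin n → Fin k => φ u = ij.1 ∧ φ v = ij.2).card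
            * F ij.1 ij.2 := by
  classical
  rw [← Finset.sum_fiberwise Finset.univ (fun φ : Fin n → Fin k => (φ u, φ v))
    (fun φ => F (φ u) (φ v))]
  refine Finset.sum_congr rfl fun ij _ => ?_
  have h1 : (Finset.univ.filter fun φ : Fin n → Fin k => (φ u, φ v) = ij)
      = Finset.univ.filter fun φ : Fin n → Fin k => φ u = ij.1 ∧ φ v = ij.2 := by
    apply Finset.filter_congr; intro φ _; simp [Prod.ext_iff]
  rw [h1]
  rw [Finset.sum_congr rfl (fun φ hφ => by
    simp only [mem_filter] at hφ
    rw [hφ.2.1, hφ.2.2])]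
  · simp [mul_comm]

/-- The adjacency condition for the graph built from a map into the CRG. -/
private def cnd (K : CRG) {n : ℕ} (G : SimpleGraph (Fin n)) (u v : Fin n)
    (i j : Fin K.n) : Prop :=
  (i = j ∧ K.vcol i = true) ∨
    (i ≠ j ∧ (K.ecol i j = EColor.black ∨ (K.ecol i j = EColor.gray ∧ G.Adj u v)))

/-- The graph built from `G` and a map `φ` into the CRG `K`. -/
private def Gph (K : CRG) {n : ℕ} (G : SimpleGraph (Fin n)) (φ : Fin n → Fin K.n) :
    SimpleGraph (Fin n) where
  Adj u v := u ≠ v ∧ cnd K G u v (φ u) (φ v)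
  symm := by
    constructor
    rintro u v ⟨hne, h⟩
    refine ⟨hne.symm, ?_⟩
    rcases h with ⟨he, hv⟩ | ⟨hne', h⟩
    · exact Or.inl ⟨he.symm, he ▸ hv⟩
    · refine Or.inr ⟨hne'.symm, ?_⟩
      rw [K.ecol_symm (φ v) (φ u)]
      rcases h with h | ⟨h, ha⟩
      exacts [Or.inl h, Or.inr ⟨h, ha.symm⟩]
  loopless := ⟨fun u h => h.1 rfl⟩

private lemma Gph_adj (K : CRG) {n : ℕ} (G : SimpleGraph (Fin n)) (φ : Fin n → Fin K.n)
    (u v : Fin n) : (Gph K G φ).Adj u v ↔ u ≠ v ∧ cnd K G u v (φ u) (φ v) := Iff.rfl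

private lemma Gph_free (ℱ : GraphFam) (K : CRG) (hK : K ∈ KFam ℱ) {n : ℕ}
    (G : SimpleGraph (Fin n)) (φ : Fin n → Fin K.n) : FamFree ℱ (Gph K G φ) := by
  intro F hF hne
  obtain ⟨ι⟩ := hne
  refine hK F hF ⟨fun a => φ (ι a), ?_, ?_⟩
  · intro a b hab
    have h : (Gph K G φ).Adj (ι a) (ι b) := ι.map_adj_iff.mpr hab
    rcases h.2 with ⟨he, hv⟩ | ⟨hne', h⟩
    · exact Or.inl ⟨he, hv⟩
    · refine Or.inr ⟨hne', ?_⟩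
      rcases h with h | ⟨h, _⟩ <;> simp [h]
  · intro a b hab hnadj
    have hne' : ι a ≠ ι b := fun h => hab (ι.injective h)
    have hnadj' : ¬ (Gph K G φ).Adj (ι a) (ι b) := fun h => hnadj (ι.map_adj_iff.mp h)
    by_cases he : φ (ι a) = φ (ι b)
    · refine Or.inl ⟨he, ?_⟩
      cases hbv : K.vcol (φ (ι a))
      · rfl
      · exact absurd ⟨hne', Or.inl ⟨he, hbv⟩⟩ hnadj'
    · exact Or.inr ⟨he, fun hbl => hnadj' ⟨hne', Or.inr ⟨he, Or.inl hbl⟩⟩⟩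

/-- The symmetric-difference graph of two graphs. -/
private def sdG {V : Type} (G G' : SimpleGraph V) : SimpleGraph V where
  Adj u v := ¬ (G.Adj u v ↔ G'.Adj u v)
  symm := by constructor; intro u v h; rw [G.adj_comm, G'.adj_comm]; exact h
  loopless := ⟨fun u h => h ⟨fun h' => absurd h' (G.irrefl), fun h' => absurd h' (G'.irrefl)⟩⟩

open scoped Classical in
private lemma two_mul_editDist {V : Type} [Fintype V] [DecidableEq V]
    (G G' : SimpleGraph V) :
    2 * editDist G G'
      = (Finset.univ.filter fun p : V × V => ¬ (G.Adj p.1 p.2 ↔ G'.Adj p.1 p.2)).card := by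
  classical
  have hset : symmDiff G.edgeSet G'.edgeSet = (sdG G G').edgeSet := by
    ext e
    induction e with
    | _ u v =>
      simp only [Set.mem_symmDiff, SimpleGraph.mem_edgeSet, sdG]
      tauto
  have h1 : editDist G G' = (sdG G G').edgeFinset.card := by
    rw [editDist, hset, Set.ncard_eq_toFinset_card', SimpleGraph.edgeFinset]
  rw [h1, ← card_ordered_pairs (sdG G G')]
  congr 1
  exact Finset.filter_congr fun p _ => Iff.rfl

end AuxCRG

theorem crg_upper_bound (ℱ : GraphFam) (K : CRG) (hK : K ∈ KFam ℱ)
    (n m : ℕ) (hn : 2 ≤ n) (G : SimpleGraph (Fin n)) (hm : G.edgeSet.ncard = m) :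
    (∃ G' : SimpleGraph (Fin n), FamFree ℱ G' ∧
      (editDist G G' : ℝ) ≤ K.fK ((m : ℝ) / (n.choose 2 : ℝ)) * (n.choose 2 : ℝ)) ∧
    (distFam ℱ G : ℝ) ≤ K.fK ((m : ℝ) / (n.choose 2 : ℝ)) * (n.choose 2 : ℝ) := by
  classical
  obtain ⟨i0⟩ : Nonempty (Fin K.n) := ⟨⟨0, K.npos⟩⟩
  set w := (Finset.univ.filter (fun i : Fin K.n => K.vcol i = false)).card with hw
  set W2 := (Finset.univ.filter (fun ij : Fin K.n × Fin K.n =>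
      ij.1 ≠ ij.2 ∧ K.ecol ij.1 ij.2 = EColor.white)).card with hW2
  set b := (Finset.univ.filter (fun i : Fin K.n => K.vcol i = true)).card with hb
  set B2 := (Finset.univ.filter (fun ij : Fin K.n × Fin K.n =>
      ij.1 ≠ ij.2 ∧ K.ecol ij.1 ij.2 = EColor.black)).card with hB2
  set A := w + W2 with hA
  set B := b + B2 with hB
  have count_discord : ∀ u v : Fin n, u ≠ v →
      (Finset.univ.filter fun ij : Fin K.n × Fin K.n =>
          ¬ (G.Adj u v ↔ cnd K G u v ij.1 ij.2)).card
        = if G.Adj u v then A else B := by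
    intro u v huv
    by_cases hadj : G.Adj u v
    · rw [if_pos hadj]
      have hcg : ∀ ij : Fin K.n × Fin K.n,
          ((¬ (G.Adj u v ↔ cnd K G u v ij.1 ij.2)) ↔
            ((ij.1 = ij.2 ∧ K.vcol ij.1 = false) ∨
              (ij.1 ≠ ij.2 ∧ K.ecol ij.1 ij.2 = EColor.white))) := by
        rintro ⟨x, y⟩
        rcases eq_or_ne x y with rfl | h
        · cases hvb : K.vcol x <;> simp [cnd, hvb, hadj]
        · cases hec : K.ecol x y <;> simp [cnd, h, hec, hadj]
      have h1 : (Finset.univ.filter fun ij : Fin K.n × Fin K.n =>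
            ¬ (G.Adj u v ↔ cnd K G u v ij.1 ij.2)).card
          = (Finset.univ.filter fun ij : Fin K.n × Fin K.n =>
              ij.1 = ij.2 ∧ K.vcol ij.1 = false).card
            + (Finset.univ.filter fun ij : Fin K.n × Fin K.n =>
              ij.1 ≠ ij.2 ∧ K.ecol ij.1 ij.2 = EColor.white).card :=
        card_filter_or_disjoint _ _ _ hcg (fun ij h1 h2 => h2.1 h1.1)
      have h2 : (Finset.univ.filter fun ij : Fin K.n × Fin K.n =>
            ij.1 = ij.2 ∧ K.vcol ij.1 = false).card
          = (Finset.univ.filter fun i : Fin K.n => K.vcol i = false).card :=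
        card_diag_filter' _ _ (fun ij => Iff.rfl)
      rw [h1, h2, hA, hw, hW2]
    · rw [if_neg hadj]
      have hcg : ∀ ij : Fin K.n × Fin K.n,
          ((¬ (G.Adj u v ↔ cnd K G u v ij.1 ij.2)) ↔
            ((ij.1 = ij.2 ∧ K.vcol ij.1 = true) ∨
              (ij.1 ≠ ij.2 ∧ K.ecol ij.1 ij.2 = EColor.black))) := by
        rintro ⟨x, y⟩
        rcases eq_or_ne x y with rfl | h
        · cases hvb : K.vcol x <;> simp [cnd, hvb, hadj]
        · cases hec : K.ecol x y <;> simp [cnd, h, hec, hadj]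
      have h1 : (Finset.univ.filter fun ij : Fin K.n × Fin K.n =>
            ¬ (G.Adj u v ↔ cnd K G u v ij.1 ij.2)).card
          = (Finset.univ.filter fun ij : Fin K.n × Fin K.n =>
              ij.1 = ij.2 ∧ K.vcol ij.1 = true).card
            + (Finset.univ.filter fun ij : Fin K.n × Fin K.n =>
              ij.1 ≠ ij.2 ∧ K.ecol ij.1 ij.2 = EColor.black).card :=
        card_filter_or_disjoint _ _ _ hcg (fun ij h1 h2 => h2.1 h1.1)
      have h2 : (Finset.univ.filter fun ij : Fin K.n × Fin K.n =>
            ij.1 = ij.2 ∧ K.vcol ij.1 = true).card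
          = (Finset.univ.filter fun i : Fin K.n => K.vcol i = true).card :=
        card_diag_filter' _ _ (fun ij => Iff.rfl)
      rw [h1, h2, hB, hb, hB2]
  set Dord : (Fin n → Fin K.n) → ℕ := fun φ =>
    (Finset.univ.filter fun p : Fin n × Fin n =>
      ¬ (G.Adj p.1 p.2 ↔ (Gph K G φ).Adj p.1 p.2)).card with hDord
  set cls : Fin n → Fin n → ℕ := fun u v =>
    (Finset.univ.filter fun φ : Fin n → Fin K.n => φ u = i0 ∧ φ v = i0).card with hcls
  set N := Fintype.card (Fin n → Fin K.n) with hN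
  have hNpos : 0 < N := Fintype.card_pos_iff.mpr ⟨fun _ => i0⟩
  have hfiber : ∀ u v : Fin n, u ≠ v → K.n ^ 2 * cls u v = N := by
    intro u v huv
    have h1 : N = ∑ ij : Fin K.n × Fin K.n,
        (Finset.univ.filter fun φ : Fin n → Fin K.n => φ u = ij.1 ∧ φ v = ij.2).card := by
      rw [hN, ← Finset.card_univ]
      rw [Finset.card_eq_sum_card_fiberwise
        (f := fun φ : Fin n → Fin K.n => (φ u, φ v)) (t := Finset.univ)
        (fun _ _ => Finset.mem_univ _)]
      refine Finset.sum_congr rfl fun ij _ => ?_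
      congr 1
      apply Finset.filter_congr
      intro φ _
      simp [Prod.ext_iff]
    have h2 : ∀ ij : Fin K.n × Fin K.n,
        (Finset.univ.filter fun φ : Fin n → Fin K.n => φ u = ij.1 ∧ φ v = ij.2).card
          = cls u v := fun ij => card_class huv ij.1 ij.2 i0 i0
    rw [h1, Finset.sum_congr rfl fun ij _ => h2 ij, Finset.sum_const]
    simp [mul_comm, sq]
  have hpair : ∀ u v : Fin n, u ≠ v →
      (∑ φ : Fin n → Fin K.n, if ¬ (G.Adj u v ↔ (Gph K G φ).Adj u v) then 1 else 0)
        = cls u v * (if G.Adj u v then A else B) := by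
    intro u v huv
    have h0 : ∀ φ : Fin n → Fin K.n,
        (if ¬ (G.Adj u v ↔ (Gph K G φ).Adj u v) then 1 else 0)
          = (fun i j => if ¬ (G.Adj u v ↔ cnd K G u v i j) then 1 else 0) (φ u) (φ v) := by
      intro φ
      have hiff : ((G.Adj u v ↔ (Gph K G φ).Adj u v)) ↔
          (G.Adj u v ↔ cnd K G u v (φ u) (φ v)) := by
        rw [Gph_adj, and_iff_right huv]
      simp only [hiff]
    rw [Finset.sum_congr rfl fun φ _ => h0 φ]
    rw [sum_fun_eq u v (fun i j => if ¬ (G.Adj u v ↔ cnd K G u v i j) then 1 else 0)]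
    have h2 : ∀ ij : Fin K.n × Fin K.n,
        (Finset.univ.filter fun φ : Fin n → Fin K.n => φ u = ij.1 ∧ φ v = ij.2).card
          = cls u v := fun ij => card_class huv ij.1 ij.2 i0 i0
    rw [Finset.sum_congr rfl fun ij _ => by rw [h2 ij]]
    rw [← Finset.mul_sum]
    congr 1
    rw [← Finset.card_filter, count_discord u v huv]
  have hswap : ∑ φ : Fin n → Fin K.n, Dord φ
      = ∑ p : Fin n × Fin n, ∑ φ : Fin n → Fin K.n,
          (if ¬ (G.Adj p.1 p.2 ↔ (Gph K G φ).Adj p.1 p.2) then 1 else 0) := by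
    have h1 : ∀ φ : Fin n → Fin K.n, Dord φ
        = ∑ p : Fin n × Fin n,
            (if ¬ (G.Adj p.1 p.2 ↔ (Gph K G φ).Adj p.1 p.2) then 1 else 0) := by
      intro φ
      simp only [hDord]
      exact Finset.card_filter _ _
    rw [Finset.sum_congr rfl fun φ _ => h1 φ]
    exact Finset.sum_comm
  have hterm : ∀ p : Fin n × Fin n,
      (∑ φ : Fin n → Fin K.n, if ¬ (G.Adj p.1 p.2 ↔ (Gph K G φ).Adj p.1 p.2) then 1 else 0)
        = if p.1 ≠ p.2 then cls p.1 p.2 * (if G.Adj p.1 p.2 then A else B) else 0 := by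
    rintro ⟨a, c⟩
    by_cases hne : a ≠ c
    · rw [if_pos hne]; exact hpair a c hne
    · rw [if_neg hne]
      push_neg at hne
      subst hne
      have h0 : ∀ φ : Fin n → Fin K.n,
          (if ¬ (G.Adj a a ↔ (Gph K G φ).Adj a a) then 1 else 0) = 0 := by
        intro φ
        rw [if_neg (not_not_intro ⟨fun h => absurd h (G.irrefl),
          fun h => absurd h ((Gph K G φ).irrefl)⟩)]
      rw [Finset.sum_congr rfl fun φ _ => h0 φ, Finset.sum_const, smul_zero]
  set eP := (Finset.univ.filter fun p : Fin n × Fin n => G.Adj p.1 p.2).card with heP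
  set qP := (Finset.univ.filter fun p : Fin n × Fin n =>
      p.1 ≠ p.2 ∧ ¬ G.Adj p.1 p.2).card with hqP
  have hmain : K.n ^ 2 * ∑ φ : Fin n → Fin K.n, Dord φ = N * (eP * A + qP * B) := by
    rw [hswap, Finset.mul_sum]
    have hterm2 : ∀ p : Fin n × Fin n,
        K.n ^ 2 * (∑ φ : Fin n → Fin K.n,
            if ¬ (G.Adj p.1 p.2 ↔ (Gph K G φ).Adj p.1 p.2) then 1 else 0)
          = N * ((if G.Adj p.1 p.2 then A else 0)
              + (if p.1 ≠ p.2 ∧ ¬ G.Adj p.1 p.2 then B else 0)) := by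
      rintro ⟨a, c⟩
      rw [hterm ⟨a, c⟩]
      by_cases hne : a ≠ c
      · simp only [if_pos hne, ← mul_assoc, hfiber a c hne]
        by_cases hadj : G.Adj a c
        · simp [hadj]
        · simp [hadj, hne]
      · push_neg at hne
        subst hne
        have hnadj : ¬ G.Adj a a := G.irrefl
        simp [hnadj]
    rw [Finset.sum_congr rfl fun p _ => hterm2 p, ← Finset.mul_sum]
    congr 1
    rw [Finset.sum_add_distrib, ← Finset.sum_filter, ← Finset.sum_filter,
      Finset.sum_const, Finset.sum_const, smul_eq_mul, smul_eq_mul]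
  have hmcard : G.edgeFinset.card = m := by
    rw [← hm, Set.ncard_eq_toFinset_card', SimpleGraph.edgeFinset]
  have heP2 : eP = 2 * m := by
    have h := card_ordered_pairs G
    rw [heP, ← hmcard, ← h]
  have hsplit : eP + qP + n = n * n := by
    have h1 := Finset.card_filter_add_card_filter_not
      (s := (Finset.univ : Finset (Fin n × Fin n)))
      (p := fun p : Fin n × Fin n => p.1 = p.2)
    rw [card_diag_pairs] at h1
    have hcard : (Finset.univ : Finset (Fin n × Fin n)).card = n * n := by
      simp [Finset.card_univ]
    rw [hcard] at h1
    have h2 := Finset.card_filter_add_card_filter_not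
      (s := (Finset.univ.filter fun p : Fin n × Fin n => ¬ p.1 = p.2))
      (p := fun p : Fin n × Fin n => G.Adj p.1 p.2)
    rw [Finset.filter_filter, Finset.filter_filter] at h2
    have e1 : (Finset.univ.filter fun p : Fin n × Fin n => ¬ p.1 = p.2 ∧ G.Adj p.1 p.2)
        = Finset.univ.filter fun p : Fin n × Fin n => G.Adj p.1 p.2 := by
      apply Finset.filter_congr
      intro p _
      simp only [and_iff_right_iff_imp]
      exact fun h => G.ne_of_adj h
    rw [e1] at h2
    have e2 : (Finset.univ.filter fun p : Fin n × Fin n => ¬ p.1 = p.2 ∧ ¬ G.Adj p.1 p.2)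
        = Finset.univ.filter fun p : Fin n × Fin n => p.1 ≠ p.2 ∧ ¬ G.Adj p.1 p.2 := rfl
    rw [e2] at h2
    rw [← heP, ← hqP] at h2
    omega
  obtain ⟨φ₀, -, hmin⟩ := Finset.exists_min_image Finset.univ Dord
    ⟨fun _ => i0, Finset.mem_univ _⟩
  have havg : N * Dord φ₀ ≤ ∑ φ : Fin n → Fin K.n, Dord φ := by
    calc N * Dord φ₀ = ∑ _φ : Fin n → Fin K.n, Dord φ₀ := by
          rw [Finset.sum_const, Finset.card_univ, smul_eq_mul]
      _ ≤ ∑ φ : Fin n → Fin K.n, Dord φ :=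
          Finset.sum_le_sum fun φ _ => hmin φ (Finset.mem_univ φ)
  have hkey : K.n ^ 2 * Dord φ₀ ≤ eP * A + qP * B := by
    have h1 : N * (K.n ^ 2 * Dord φ₀) ≤ N * (eP * A + qP * B) := by
      calc N * (K.n ^ 2 * Dord φ₀) = K.n ^ 2 * (N * Dord φ₀) := by ring
        _ ≤ K.n ^ 2 * ∑ φ : Fin n → Fin K.n, Dord φ := Nat.mul_le_mul_left _ havg
        _ = N * (eP * A + qP * B) := hmain
    exact Nat.le_of_mul_le_mul_left h1 hNpos
  have hed : 2 * editDist G (Gph K G φ₀) = Dord φ₀ := by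
    rw [two_mul_editDist]
  set C := n.choose 2 with hC
  have h2C : 2 * C = n * (n - 1) := by
    rw [hC, Nat.choose_two_right]
    obtain ⟨a, ha⟩ := Nat.even_mul_succ_self (n - 1)
    have hn' : n - 1 + 1 = n := by omega
    rw [hn'] at ha
    rw [Nat.mul_comm n (n - 1), ha]
    omega
  have hCpos : 0 < C := Nat.choose_pos hn
  clear_value w W2 b B2 A B Dord cls N eP qP C
  -- pass to the reals
  have hkposn : (0:ℝ) < (K.n : ℝ) := by exact_mod_cast K.npos
  have hkpos : (0:ℝ) < (K.n : ℝ) ^ 2 := by positivity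
  have hCposR : (0:ℝ) < (C : ℝ) := by exact_mod_cast hCpos
  have hn1R : ((n - 1 : ℕ) : ℝ) = (n : ℝ) - 1 := by
    rw [Nat.cast_sub (by omega : 1 ≤ n)]; norm_num
  have h2CR : 2 * (C : ℝ) = (n : ℝ) * ((n : ℝ) - 1) := by
    rw [← hn1R]; exact_mod_cast h2C
  have hsplitR : (eP : ℝ) + (qP : ℝ) + (n : ℝ) = (n : ℝ) * (n : ℝ) := by
    exact_mod_cast hsplit
  have heP2R : (eP : ℝ) = 2 * (m : ℝ) := by exact_mod_cast heP2
  have hqPR : (qP : ℝ) = 2 * (C : ℝ) - 2 * (m : ℝ) := by linarith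
  have hmC : (m : ℝ) ≤ (C : ℝ) := by
    have : (0:ℝ) ≤ (qP : ℝ) := Nat.cast_nonneg qP
    linarith
  have hkeyR : (K.n : ℝ) ^ 2 * (Dord φ₀ : ℝ)
      ≤ (eP : ℝ) * ((w : ℝ) + (W2 : ℝ)) + (qP : ℝ) * ((b : ℝ) + (B2 : ℝ)) := by
    have hc : ((K.n ^ 2 * Dord φ₀ : ℕ) : ℝ) ≤ ((eP * A + qP * B : ℕ) : ℝ) := by
      exact_mod_cast hkey
    rw [hA, hB] at hc
    push_cast at hc
    push_cast
    linarith
  have hedR : 2 * (editDist G (Gph K G φ₀) : ℝ) = (Dord φ₀ : ℝ) := by exact_mod_cast hed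
  have hfK : K.fK ((m : ℝ) / (C : ℝ)) * (C : ℝ)
      = (1 / (K.n : ℝ) ^ 2) * ((m : ℝ) * ((w : ℝ) + (W2 : ℝ))
          + ((C : ℝ) - (m : ℝ)) * ((b : ℝ) + (B2 : ℝ))) := by
    simp only [CRG.fK, ← hw, ← hW2, ← hb, ← hB2]
    have hC0 : (C : ℝ) ≠ 0 := ne_of_gt hCposR
    field_simp
  have hbound : (editDist G (Gph K G φ₀) : ℝ) ≤ K.fK ((m : ℝ) / (C : ℝ)) * (C : ℝ) := by
    rw [hfK, one_div_mul_eq_div, le_div_iff₀ hkpos]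
    rw [heP2R, hqPR, ← hedR] at hkeyR
    linarith [hkeyR]
  refine ⟨⟨Gph K G φ₀, Gph_free ℱ K hK G φ₀, hbound⟩, ?_⟩
  have hle : distFam ℱ G ≤ editDist G (Gph K G φ₀) :=
    Nat.sInf_le ⟨Gph K G φ₀, Gph_free ℱ K hK G φ₀, rfl⟩
  exact le_trans (by exact_mod_cast hle) hbound
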